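/- Trace-norm contraction of completely positive trace-nonincreasing Kraus maps: let K_1,…,K_m be d×d complex matrices with Σⱼ KⱼᴴKⱼ ≤ I in the Loewner order. Then for every d×d complex matrix A, ‖Σⱼ Kⱼ A Kⱼᴴ‖₁ ≤ ‖A‖₁. -/

import Mathlib

open Matrix
open scoped ComplexOrder

/-- The positive semidefinite square root of a matrix (defined to be `0` if the matrix is not
positive semidefinite). -/
noncomputable def matSqrt {d : ℕ} (A : Matrix (Fin d) (Fin d) ℂ) : Matrix (Fin d) (Fin d) ℂ :=
  open scoped Classical in
  if h : A.PosSemidef then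
    (h.1.eigenvectorUnitary : Matrix (Fin d) (Fin d) ℂ) *
      diagonal ((↑) ∘ (h.1.eigenvalues · |>.sqrt)) *
      (star h.1.eigenvectorUnitary : Matrix (Fin d) (Fin d) ℂ)
  else 0

/-- The trace norm `‖A‖₁ = Re (Tr √(AᴴA))` of a complex matrix. -/
noncomputable def traceNorm {d : ℕ} (A : Matrix (Fin d) (Fin d) ℂ) : ℝ :=
  (Matrix.trace (matSqrt (Aᴴ * A))).re

set_option linter.unusedSectionVars false

namespace Stmt18Aux

variable {ι : Type*} [Fintype ι]

noncomputable def N2 (u : ι → ℂ) : ℝ := ∑ i, Complex.normSq (u i)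

lemma N2_nonneg (u : ι → ℂ) : 0 ≤ N2 u :=
  Finset.sum_nonneg fun _ _ => Complex.normSq_nonneg _

lemma star_dot_self (u : ι → ℂ) : star u ⬝ᵥ u = ((N2 u : ℝ) : ℂ) := by
  simp only [dotProduct, Pi.star_apply, N2, Complex.ofReal_sum]
  exact Finset.sum_congr rfl fun i _ => by
    rw [Complex.normSq_eq_conj_mul_self]; rfl

lemma abs_dot_le (u v : ι → ℂ) :
    ‖star u ⬝ᵥ v‖ ≤ Real.sqrt (N2 u) * Real.sqrt (N2 v) := by
  have h1 : ‖star u ⬝ᵥ v‖ ≤ ∑ i, ‖u i‖ * ‖v i‖ := by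
    refine (norm_sum_le _ _).trans_eq ?_
    exact Finset.sum_congr rfl fun i _ => by
      simp [Pi.star_apply, Complex.norm_conj]
  have h2 : (∑ i, ‖u i‖ * ‖v i‖) ^ 2 ≤ N2 u * N2 v := by
    have := Finset.sum_mul_sq_le_sq_mul_sq Finset.univ
      (fun i => ‖u i‖) (fun i => ‖v i‖)
    simpa [N2, Complex.sq_norm] using this
  have h0 : 0 ≤ ∑ i, ‖u i‖ * ‖v i‖ :=
    Finset.sum_nonneg fun i _ => mul_nonneg (norm_nonneg _) (norm_nonneg _)
  refine h1.trans ?_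
  rw [← Real.sqrt_mul (N2_nonneg u)]
  exact (Real.le_sqrt h0 (mul_nonneg (N2_nonneg u) (N2_nonneg v))).mpr h2

lemma re_dot_le (u v : ι → ℂ) :
    (star u ⬝ᵥ v).re ≤ Real.sqrt (N2 u) * Real.sqrt (N2 v) :=
  (Complex.re_le_norm _).trans (abs_dot_le u v)

lemma dot_shift (M : Matrix ι ι ℂ) (x y : ι → ℂ) :
    star (M *ᵥ x) ⬝ᵥ y = star x ⬝ᵥ (Mᴴ *ᵥ y) := by
  rw [Matrix.star_mulVec, ← Matrix.dotProduct_mulVec]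

variable [DecidableEq ι]

lemma quad_form (X : Matrix ι ι ℂ) (x : ι → ℂ) :
    star x ⬝ᵥ ((1 - Xᴴ * X) *ᵥ x) = ((N2 x - N2 (X *ᵥ x) : ℝ) : ℂ) := by
  rw [Matrix.sub_mulVec, dotProduct_sub, Matrix.one_mulVec, star_dot_self,
    ← Matrix.mulVec_mulVec, ← dot_shift X x (X *ᵥ x), star_dot_self, ← Complex.ofReal_sub]

lemma contr_iff (X : Matrix ι ι ℂ) :
    (1 - Xᴴ * X).PosSemidef ↔ ∀ x : ι → ℂ, N2 (X *ᵥ x) ≤ N2 x := by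
  constructor
  · intro h x
    have h2 := h.dotProduct_mulVec_nonneg x
    rw [quad_form] at h2
    have := (Complex.zero_le_real).mp h2
    linarith
  · intro h
    refine Matrix.PosSemidef.of_dotProduct_mulVec_nonneg ?_ ?_
    · show (1 - Xᴴ * X)ᴴ = _
      simp [Matrix.conjTranspose_sub, Matrix.conjTranspose_mul]
    · intro x
      rw [quad_form]
      exact Complex.zero_le_real.mpr (by linarith [h x])

lemma sqrt_N2_le {u v : ι → ℂ} (h : N2 u ≤ N2 v) : Real.sqrt (N2 u) ≤ Real.sqrt (N2 v) :=
  Real.sqrt_le_sqrt h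

lemma N2_le_of_sq_le {u v : ι → ℂ}
    (h : N2 u ≤ Real.sqrt (N2 u) * Real.sqrt (N2 v)) : N2 u ≤ N2 v := by
  have h1 := Real.mul_self_sqrt (N2_nonneg u)
  have h2 := Real.mul_self_sqrt (N2_nonneg v)
  nlinarith [sq_nonneg (Real.sqrt (N2 u) - Real.sqrt (N2 v))]

lemma contr_conjTranspose {X : Matrix ι ι ℂ} (h : ∀ x : ι → ℂ, N2 (X *ᵥ x) ≤ N2 x) :
    ∀ x : ι → ℂ, N2 (Xᴴ *ᵥ x) ≤ N2 x := by
  intro x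
  refine N2_le_of_sq_le ?_
  calc N2 (Xᴴ *ᵥ x) = (star x ⬝ᵥ (X *ᵥ (Xᴴ *ᵥ x))).re := by
        have e : star (Xᴴ *ᵥ x) ⬝ᵥ (Xᴴ *ᵥ x) = star x ⬝ᵥ (X *ᵥ (Xᴴ *ᵥ x)) := by
          rw [dot_shift, Matrix.conjTranspose_conjTranspose]
        rw [← e, star_dot_self, Complex.ofReal_re]
    _ ≤ Real.sqrt (N2 x) * Real.sqrt (N2 (X *ᵥ (Xᴴ *ᵥ x))) := re_dot_le _ _
    _ ≤ Real.sqrt (N2 x) * Real.sqrt (N2 (Xᴴ *ᵥ x)) :=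
        mul_le_mul_of_nonneg_left (sqrt_N2_le (h _)) (Real.sqrt_nonneg _)
    _ = Real.sqrt (N2 (Xᴴ *ᵥ x)) * Real.sqrt (N2 x) := mul_comm _ _

lemma sum_mulVec {m : ℕ} (M : Fin m → Matrix ι ι ℂ) (v : ι → ℂ) :
    (∑ j, M j) *ᵥ v = ∑ j, (M j *ᵥ v) := by
  ext i
  simp [Matrix.mulVec, dotProduct, Matrix.sum_apply, Finset.sum_mul]
  rw [Finset.sum_comm]

/-- From `Σ KⱼᴴKⱼ ≤ 1`: the sum of squared norms is bounded. -/
lemma dot_sum {m : ℕ} (u : ι → ℂ) (w : Fin m → ι → ℂ) :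
    u ⬝ᵥ (∑ j, w j) = ∑ j, u ⬝ᵥ w j := by
  simp only [dotProduct, Finset.sum_apply, Finset.mul_sum]
  rw [Finset.sum_comm]

lemma sumK_bound {m : ℕ} {K : Fin m → Matrix ι ι ℂ}
    (hK : ((1 : Matrix ι ι ℂ) - ∑ j, (K j)ᴴ * K j).PosSemidef) (z : ι → ℂ) :
    ∑ j, N2 (K j *ᵥ z) ≤ N2 z := by
  have h2 := hK.dotProduct_mulVec_nonneg z
  have e : star z ⬝ᵥ (((1 : Matrix ι ι ℂ) - ∑ j, (K j)ᴴ * K j) *ᵥ z)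
      = ((N2 z - ∑ j, N2 (K j *ᵥ z) : ℝ) : ℂ) := by
    rw [Matrix.sub_mulVec, dotProduct_sub, Matrix.one_mulVec, star_dot_self,
      sum_mulVec, dot_sum]
    have e2 : ∀ j, star z ⬝ᵥ (((K j)ᴴ * K j) *ᵥ z) = ((N2 (K j *ᵥ z) : ℝ) : ℂ) := by
      intro j
      rw [← Matrix.mulVec_mulVec, ← dot_shift (K j) z, star_dot_self]
    rw [Finset.sum_congr rfl fun j _ => e2 j]
    push_cast
    ring
  rw [e] at h2
  have := Complex.zero_le_real.mp h2
  linarith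

lemma sqrt_cs {m : ℕ} (f g : Fin m → ℝ) (hf : ∀ j, 0 ≤ f j) (hg : ∀ j, 0 ≤ g j) :
    ∑ j, Real.sqrt (f j) * Real.sqrt (g j) ≤ Real.sqrt (∑ j, f j) * Real.sqrt (∑ j, g j) := by
  have h2 : (∑ j, Real.sqrt (f j) * Real.sqrt (g j)) ^ 2 ≤ (∑ j, f j) * (∑ j, g j) := by
    have := Finset.sum_mul_sq_le_sq_mul_sq Finset.univ
      (fun j => Real.sqrt (f j)) (fun j => Real.sqrt (g j))
    simpa [Real.sq_sqrt (hf _), Real.sq_sqrt (hg _)] using this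
  have h0 : 0 ≤ ∑ j, Real.sqrt (f j) * Real.sqrt (g j) :=
    Finset.sum_nonneg fun j _ => mul_nonneg (Real.sqrt_nonneg _) (Real.sqrt_nonneg _)
  rw [← Real.sqrt_mul (Finset.sum_nonneg fun j _ => hf j)]
  exact (Real.le_sqrt h0 (mul_nonneg (Finset.sum_nonneg fun j _ => hf j)
    (Finset.sum_nonneg fun j _ => hg j))).mpr h2

lemma kraus_contr {m : ℕ} {K : Fin m → Matrix ι ι ℂ}
    (hK : ((1 : Matrix ι ι ℂ) - ∑ j, (K j)ᴴ * K j).PosSemidef)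
    {W : Matrix ι ι ℂ} (hW : ∀ z : ι → ℂ, N2 (W *ᵥ z) ≤ N2 z) :
    ∀ x : ι → ℂ, N2 ((∑ j, (K j)ᴴ * W * K j) *ᵥ x) ≤ N2 x := by
  intro x
  set Y : Matrix ι ι ℂ := ∑ j, (K j)ᴴ * W * K j with hY
  set y : ι → ℂ := Y *ᵥ x with hy
  refine N2_le_of_sq_le ?_
  have step1 : N2 y = ∑ j, (star (K j *ᵥ y) ⬝ᵥ (W *ᵥ (K j *ᵥ x))).re := by
    have e1 : star y ⬝ᵥ (Y *ᵥ x) = ∑ j, star (K j *ᵥ y) ⬝ᵥ (W *ᵥ (K j *ᵥ x)) := by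
      rw [hY, sum_mulVec, dot_sum]
      refine Finset.sum_congr rfl fun j _ => ?_
      rw [← Matrix.mulVec_mulVec, ← Matrix.mulVec_mulVec, ← dot_shift (K j) y]
    have e0 : N2 y = (star y ⬝ᵥ (Y *ᵥ x)).re := by
      rw [← hy, star_dot_self, Complex.ofReal_re]
    rw [e0, e1, Complex.re_sum]
  calc N2 y = ∑ j, (star (K j *ᵥ y) ⬝ᵥ (W *ᵥ (K j *ᵥ x))).re := step1
    _ ≤ ∑ j, Real.sqrt (N2 (K j *ᵥ y)) * Real.sqrt (N2 (K j *ᵥ x)) := by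
        refine Finset.sum_le_sum fun j _ => ?_
        refine (re_dot_le _ _).trans ?_
        exact mul_le_mul_of_nonneg_left (sqrt_N2_le (hW _)) (Real.sqrt_nonneg _)
    _ ≤ Real.sqrt (∑ j, N2 (K j *ᵥ y)) * Real.sqrt (∑ j, N2 (K j *ᵥ x)) :=
        sqrt_cs _ _ (fun _ => N2_nonneg _) (fun _ => N2_nonneg _)
    _ ≤ Real.sqrt (N2 y) * Real.sqrt (N2 x) := by
        exact mul_le_mul (Real.sqrt_le_sqrt (sumK_bound hK y))
          (Real.sqrt_le_sqrt (sumK_bound hK x)) (Real.sqrt_nonneg _) (Real.sqrt_nonneg _)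

lemma trace_conj_mul (C D : Matrix ι ι ℂ) :
    (Cᴴ * D).trace = star (fun p : ι × ι => C p.1 p.2) ⬝ᵥ (fun p : ι × ι => D p.1 p.2) := by
  simp only [Matrix.trace, Matrix.diag, Matrix.mul_apply, Matrix.conjTranspose_apply,
    dotProduct, Fintype.sum_prod_type, Pi.star_apply]
  rw [Finset.sum_comm]

lemma trace_re_nonneg {P : Matrix ι ι ℂ} (hP : P.PosSemidef) : 0 ≤ P.trace.re := by
  have h : ∀ i, 0 ≤ (P i i).re := by
    intro i
    have h2 := hP.dotProduct_mulVec_nonneg (Pi.single i 1)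
    have e : star (Pi.single i 1) ⬝ᵥ (P *ᵥ Pi.single i (1 : ℂ)) = P i i := by
      simp [dotProduct, Matrix.mulVec, Pi.single_apply, Pi.star_apply,
        Finset.mul_sum, mul_ite, ite_mul, apply_ite]
    rw [e] at h2
    exact (Complex.le_def.mp h2).1
  rw [Matrix.trace]
  rw [Complex.re_sum]
  exact Finset.sum_nonneg fun i _ => h i

/-- Frobenius Cauchy-Schwarz for traces. -/
lemma frob_cs (C D : Matrix ι ι ℂ) :
    ((Cᴴ * D).trace).re ≤ Real.sqrt ((Cᴴ * C).trace.re) * Real.sqrt ((Dᴴ * D).trace.re) := by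
  have eC : (Cᴴ * C).trace.re = N2 (fun p : ι × ι => C p.1 p.2) := by
    rw [trace_conj_mul, star_dot_self, Complex.ofReal_re]
  have eD : (Dᴴ * D).trace.re = N2 (fun p : ι × ι => D p.1 p.2) := by
    rw [trace_conj_mul, star_dot_self, Complex.ofReal_re]
  rw [trace_conj_mul, eC, eD]
  exact (Complex.re_le_norm _).trans (abs_dot_le _ _)

lemma matSqrt_eq {d : ℕ} {A : Matrix (Fin d) (Fin d) ℂ} (h : A.PosSemidef) :
    matSqrt A = (h.1.eigenvectorUnitary : Matrix (Fin d) (Fin d) ℂ) *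
      diagonal ((↑) ∘ (h.1.eigenvalues · |>.sqrt)) *
      (star h.1.eigenvectorUnitary : Matrix (Fin d) (Fin d) ℂ) := by
  rw [matSqrt, dif_pos h]

lemma conj_mul (W : Matrix ι ι ℂ) (hW : Wᴴ * W = 1) (c c' : ι → ℂ) :
    (W * diagonal c * Wᴴ) * (W * diagonal c' * Wᴴ) = W * diagonal (fun i => c i * c' i) * Wᴴ := by
  calc (W * diagonal c * Wᴴ) * (W * diagonal c' * Wᴴ)
      = W * (diagonal c * (Wᴴ * W * (diagonal c' * Wᴴ))) := by
        simp only [Matrix.mul_assoc]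
    _ = W * diagonal (fun i => c i * c' i) * Wᴴ := by
        rw [hW, Matrix.one_mul, ← Matrix.mul_assoc (diagonal c), Matrix.diagonal_mul_diagonal]
        simp only [Matrix.mul_assoc]

lemma conj_ct (W : Matrix ι ι ℂ) (c : ι → ℂ) :
    (W * diagonal c * Wᴴ)ᴴ = W * diagonal (star c) * Wᴴ := by
  simp [Matrix.conjTranspose_mul, Matrix.diagonal_conjTranspose, Matrix.mul_assoc]

lemma conj_one (W : Matrix ι ι ℂ) (hW2 : W * Wᴴ = 1) :
    W * diagonal (fun _ => (1 : ℂ)) * Wᴴ = 1 := by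
  rw [Matrix.diagonal_one, Matrix.mul_one, hW2]

lemma conj_sub (W : Matrix ι ι ℂ) (c c' : ι → ℂ) :
    (W * diagonal c * Wᴴ) - (W * diagonal c' * Wᴴ) = W * diagonal (fun i => c i - c' i) * Wᴴ := by
  rw [← Matrix.diagonal_sub, Matrix.mul_sub W, Matrix.sub_mul]

lemma conj_zero (W : Matrix ι ι ℂ) :
    W * diagonal (fun _ => (0 : ℂ)) * Wᴴ = 0 := by
  rw [show diagonal (fun _ : ι => (0:ℂ)) = 0 from Matrix.diagonal_zero, Matrix.mul_zero,
    Matrix.zero_mul]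

/-- Polar decomposition with a contraction factor. -/
lemma polar {d : ℕ} (B : Matrix (Fin d) (Fin d) ℂ) :
    ∃ U : Matrix (Fin d) (Fin d) ℂ,
      (1 - Uᴴ * U).PosSemidef ∧ Uᴴ * B = matSqrt (Bᴴ * B) ∧ U * matSqrt (Bᴴ * B) = B := by
  have hB : (Bᴴ * B).PosSemidef := Matrix.posSemidef_conjTranspose_mul_self B
  set h : (Bᴴ * B).IsHermitian := hB.1 with hh
  set W : Matrix (Fin d) (Fin d) ℂ :=
    (Matrix.IsHermitian.eigenvectorUnitary h : Matrix (Fin d) (Fin d) ℂ) with hWdef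
  have hW1 : Wᴴ * W = 1 := by
    rw [← Matrix.star_eq_conjTranspose]
    exact Matrix.mem_unitaryGroup_iff'.mp (Matrix.IsHermitian.eigenvectorUnitary h).2
  have hW2 : W * Wᴴ = 1 := by
    rw [← Matrix.star_eq_conjTranspose]
    exact Matrix.mem_unitaryGroup_iff.mp (Matrix.IsHermitian.eigenvectorUnitary h).2
  set lam : Fin d → ℝ := Matrix.IsHermitian.eigenvalues h with hlam
  have hlam0 : ∀ i, 0 ≤ lam i := fun i => hB.eigenvalues_nonneg i
  set F : (Fin d → ℂ) → Matrix (Fin d) (Fin d) ℂ := fun c => W * diagonal c * Wᴴ with hF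
  have hFmul : ∀ c c', F c * F c' = F (fun i => c i * c' i) := fun c c' => conj_mul W hW1 c c'
  have hFct : ∀ c, (F c)ᴴ = F (star c) := fun c => conj_ct W c
  have hFone : F (fun _ => 1) = 1 := conj_one W hW2
  have hFzero : F (fun _ => 0) = 0 := conj_zero W
  have hFsub : ∀ c c', F c - F c' = F (fun i => c i - c' i) := fun c c' => conj_sub W c c'
  have hspec : Bᴴ * B = F (fun i => (lam i : ℂ)) := by
    conv_lhs => rw [Matrix.IsHermitian.spectral_theorem h]
    rfl
  have hsqrt : matSqrt (Bᴴ * B) = F (fun i => ((Real.sqrt (lam i) : ℝ) : ℂ)) := by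
    rw [matSqrt_eq hB]
    rfl
  -- real scalar data
  set cr : Fin d → ℝ := fun i => if lam i = 0 then 0 else (Real.sqrt (lam i))⁻¹ with hcr
  set chi : Fin d → ℝ := fun i => if lam i = 0 then 0 else 1 with hchi
  have hsne : ∀ i, lam i ≠ 0 → Real.sqrt (lam i) ≠ 0 := fun i hz =>
    ne_of_gt (Real.sqrt_pos.mpr (lt_of_le_of_ne (hlam0 i) (Ne.symm hz)))
  have hcl : ∀ i, cr i * lam i = Real.sqrt (lam i) := by
    intro i
    rw [hcr]; simp only []
    split
    · next hz => simp [hz]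
    · next hz =>
      have hs := hsne i hz
      field_simp
      exact (Real.sq_sqrt (hlam0 i)).symm
  have hclc : ∀ i, cr i * (lam i * cr i) = chi i := by
    intro i
    rw [← mul_assoc, hcl, hchi]; simp only []
    split
    · next hz => simp [hz]
    · next hz => rw [hcr]; simp only []; rw [if_neg hz, mul_inv_cancel₀ (hsne i hz)]
  have hcs : ∀ i, cr i * Real.sqrt (lam i) = chi i := by
    intro i
    rw [hcr, hchi]; simp only []
    split
    · next hz => simp
    · next hz => rw [inv_mul_cancel₀ (hsne i hz)]
  have hzchi : ∀ i, (1 - chi i) * (lam i * (1 - chi i)) = 0 := by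
    intro i
    rw [hchi]; simp only []
    split
    · next hz => rw [hz]; ring
    · next hz => ring
  set c : Fin d → ℂ := fun i => ((cr i : ℝ) : ℂ) with hc
  have hcstar : star c = c := by
    funext i; simp [hc]
  -- function-level equalities
  have hfun1 : (fun i => c i * ((lam i : ℝ) : ℂ)) = fun i => ((Real.sqrt (lam i) : ℝ) : ℂ) := by
    funext i
    simp only [hc]
    exact_mod_cast congrArg (fun t : ℝ => (t : ℂ)) (hcl i)
  have hfun2 : (fun i => c i * (((lam i : ℝ) : ℂ) * c i)) = fun i => ((chi i : ℝ) : ℂ) := by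
    funext i
    simp only [hc]
    exact_mod_cast congrArg (fun t : ℝ => (t : ℂ)) (hclc i)
  have hfun3 : (fun i => (1 : ℂ) - ((chi i : ℝ) : ℂ)) = fun i => ((1 - chi i : ℝ) : ℂ) := by
    funext i; push_cast; ring
  set D1 : Fin d → ℂ := fun i => ((1 - chi i : ℝ) : ℂ) with hD1
  have hstarD1 : star D1 = D1 := by
    funext i; simp [hD1]
  have hfun4 : (fun i => D1 i * (((lam i : ℝ) : ℂ) * D1 i)) = fun _ => (0 : ℂ) := by
    funext i
    simp only [hD1]
    exact_mod_cast congrArg (fun t : ℝ => (t : ℂ)) (hzchi i)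
  have hfun5 : (fun i => c i * ((Real.sqrt (lam i) : ℝ) : ℂ)) = fun i => ((chi i : ℝ) : ℂ) := by
    funext i
    simp only [hc]
    exact_mod_cast congrArg (fun t : ℝ => (t : ℂ)) (hcs i)
  have hfun6 : (fun i => ((chi i : ℝ) : ℂ)) = fun i => (1 : ℂ) - D1 i := by
    funext i; simp only [hD1]; push_cast; ring
  set U : Matrix (Fin d) (Fin d) ℂ := B * F c with hU
  have hUct : Uᴴ = F c * Bᴴ := by
    rw [hU, Matrix.conjTranspose_mul, hFct, hcstar]
  have key2 : Uᴴ * B = matSqrt (Bᴴ * B) := by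
    rw [hsqrt, hUct, Matrix.mul_assoc, hspec, hFmul]
    exact congrArg F hfun1
  refine ⟨U, ?_, key2, ?_⟩
  · have hUU : Uᴴ * U = F (fun i => ((chi i : ℝ) : ℂ)) := by
      rw [hUct, hU, Matrix.mul_assoc, ← Matrix.mul_assoc Bᴴ B, hspec, hFmul, hFmul]
      exact congrArg F hfun2
    have hdiff : 1 - Uᴴ * U = F (fun i => ((1 - chi i : ℝ) : ℂ)) := by
      rw [hUU, ← hFone, hFsub]
      exact congrArg F hfun3
    rw [hdiff]
    exact Matrix.PosSemidef.mul_mul_conjTranspose_same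
      (Matrix.PosSemidef.diagonal fun i => Complex.zero_le_real.mpr
        (by rw [hchi]; simp only []; split <;> norm_num)) W
  · have hZ : B * F D1 = 0 := by
      refine Matrix.conjTranspose_mul_self_eq_zero.mp ?_
      rw [Matrix.conjTranspose_mul, hFct, hstarD1, Matrix.mul_assoc, ← Matrix.mul_assoc Bᴴ B,
        hspec, hFmul, hFmul, congrArg F hfun4, hFzero]
    have e3 : U * matSqrt (Bᴴ * B) = B * F (fun i => ((chi i : ℝ) : ℂ)) := by
      rw [hU, hsqrt, Matrix.mul_assoc, hFmul, congrArg F hfun5]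
    have e6 : F (fun i => ((chi i : ℝ) : ℂ)) = F (fun _ => (1 : ℂ)) - F D1 := by
      rw [hFsub]
      exact congrArg F hfun6
    rw [e3, e6, Matrix.mul_sub, hFone, Matrix.mul_one, hZ, sub_zero]

lemma matSqrt_props {d : ℕ} {A : Matrix (Fin d) (Fin d) ℂ} (hB : A.PosSemidef) :
    (matSqrt A).PosSemidef ∧ matSqrt A * matSqrt A = A := by
  set h : A.IsHermitian := hB.1 with hh
  set W : Matrix (Fin d) (Fin d) ℂ :=
    (Matrix.IsHermitian.eigenvectorUnitary h : Matrix (Fin d) (Fin d) ℂ) with hWdef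
  have hW1 : Wᴴ * W = 1 := by
    rw [← Matrix.star_eq_conjTranspose]
    exact Matrix.mem_unitaryGroup_iff'.mp (Matrix.IsHermitian.eigenvectorUnitary h).2
  have hsqrt : matSqrt A = W * diagonal (fun i => ((Real.sqrt (h.eigenvalues i) : ℝ) : ℂ)) * Wᴴ := by
    rw [matSqrt_eq hB]
    rfl
  have hspec : A = W * diagonal (fun i => ((h.eigenvalues i : ℝ) : ℂ)) * Wᴴ := by
    conv_lhs => rw [Matrix.IsHermitian.spectral_theorem h]
    rfl
  rw [hsqrt]
  refine ⟨Matrix.PosSemidef.mul_mul_conjTranspose_same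
    (Matrix.PosSemidef.diagonal fun i => Complex.zero_le_real.mpr (Real.sqrt_nonneg _)) W, ?_⟩
  rw [conj_mul W hW1]
  refine Eq.trans ?_ hspec.symm
  have e : (fun i => ((Real.sqrt (h.eigenvalues i) : ℝ) : ℂ) * ((Real.sqrt (h.eigenvalues i) : ℝ) : ℂ))
      = fun i => ((h.eigenvalues i : ℝ) : ℂ) := by
    funext i
    rw [← Complex.ofReal_mul, Real.mul_self_sqrt (hB.eigenvalues_nonneg i)]
  rw [e]
end Stmt18Aux

open Stmt18Aux

/-- Trace-norm contraction of completely positive trace-nonincreasing Kraus maps: if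
`Σⱼ KⱼᴴKⱼ ≤ I` in the Loewner order, then `‖Σⱼ Kⱼ A Kⱼᴴ‖₁ ≤ ‖A‖₁` for every matrix `A`. -/
theorem stmt18 {d m : ℕ} (hd : 1 ≤ d) (K : Fin m → Matrix (Fin d) (Fin d) ℂ)
    (hK : ((1 : Matrix (Fin d) (Fin d) ℂ) - ∑ j, (K j)ᴴ * K j).PosSemidef) :
    ∀ A : Matrix (Fin d) (Fin d) ℂ,
      traceNorm (∑ j, K j * A * (K j)ᴴ) ≤ traceNorm A := by
  intro A
  classical
  set B : Matrix (Fin d) (Fin d) ℂ := ∑ j, K j * A * (K j)ᴴ with hBdef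
  obtain ⟨U, hU1, hU2, -⟩ := polar B
  obtain ⟨V, hV1, -, hV3⟩ := polar A
  have hA : (Aᴴ * A).PosSemidef := Matrix.posSemidef_conjTranspose_mul_self A
  set PA : Matrix (Fin d) (Fin d) ℂ := matSqrt (Aᴴ * A) with hPAdef
  have hPA : PA.PosSemidef := by
    rw [hPAdef]; exact (matSqrt_props hA).1
  set S : Matrix (Fin d) (Fin d) ℂ := matSqrt PA with hSdef
  have hSS : S * S = PA := (matSqrt_props hPA).2
  have hSH : Sᴴ = S := (matSqrt_props hPA).1.1
  set X : Matrix (Fin d) (Fin d) ℂ := ∑ j, (K j)ᴴ * Uᴴ * K j with hX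
  have tr1 : (Uᴴ * B).trace = (X * A).trace := by
    rw [hBdef, Matrix.mul_sum, hX, Matrix.sum_mul, Matrix.trace_sum, Matrix.trace_sum]
    refine Finset.sum_congr rfl fun j _ => ?_
    have e : Uᴴ * (K j * A * (K j)ᴴ) = (Uᴴ * K j) * A * (K j)ᴴ := by
      simp only [Matrix.mul_assoc]
    rw [e, Matrix.trace_mul_cycle]
    simp only [Matrix.mul_assoc]
  have hUc : ∀ x, N2 (U *ᵥ x) ≤ N2 x := (contr_iff U).mp hU1
  have hUHc : ∀ x, N2 (Uᴴ *ᵥ x) ≤ N2 x := contr_conjTranspose hUc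
  have hXc : ∀ x, N2 (X *ᵥ x) ≤ N2 x := kraus_contr hK hUHc
  have hVc : ∀ x, N2 (V *ᵥ x) ≤ N2 x := (contr_iff V).mp hV1
  have hXVc : ∀ x, N2 ((X * V) *ᵥ x) ≤ N2 x := by
    intro x
    rw [← Matrix.mulVec_mulVec]
    exact (hXc _).trans (hVc x)
  have hXV : (1 - (X * V)ᴴ * (X * V)).PosSemidef := (contr_iff (X * V)).mpr hXVc
  set M : Matrix (Fin d) (Fin d) ℂ := X * V * S with hM
  have tr2 : (X * A).trace = (Sᴴ * M).trace := by
    have e : X * A = (X * V * S) * S := by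
      rw [← hV3, ← hSS]; simp only [Matrix.mul_assoc]
    rw [e, Matrix.trace_mul_comm, hSH, hM]
  have hMM : (Mᴴ * M).trace.re ≤ traceNorm A := by
    have e : Mᴴ * M = S * ((X * V)ᴴ * (X * V)) * S := by
      rw [hM, Matrix.conjTranspose_mul, hSH]
      simp only [Matrix.mul_assoc]
    have hpos : (S * (1 - (X * V)ᴴ * (X * V)) * Sᴴ).PosSemidef :=
      hXV.mul_mul_conjTranspose_same S
    have e2 : S * (1 - (X * V)ᴴ * (X * V)) * Sᴴ
        = S * S - S * ((X * V)ᴴ * (X * V)) * S := by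
      rw [hSH, Matrix.mul_sub, Matrix.mul_one, Matrix.sub_mul]
    have h0 := trace_re_nonneg hpos
    rw [e2, Matrix.trace_sub, Complex.sub_re] at h0
    have h1 : (S * ((X * V)ᴴ * (X * V)) * S).trace.re ≤ (S * S).trace.re := by linarith
    calc (Mᴴ * M).trace.re = (S * ((X * V)ᴴ * (X * V)) * S).trace.re := by rw [e]
      _ ≤ (S * S).trace.re := h1
      _ = traceNorm A := by rw [hSS, hPAdef]; rfl
  have htA : 0 ≤ traceNorm A := trace_re_nonneg hPA
  have e0 : traceNorm B = (Sᴴ * M).trace.re := by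
    show (matSqrt (Bᴴ * B)).trace.re = _
    rw [← hU2, tr1, tr2]
  rw [e0]
  refine (frob_cs S M).trans ?_
  have e1 : (Sᴴ * S).trace.re = traceNorm A := by rw [hSH, hSS, hPAdef]; rfl
  rw [e1]
  calc Real.sqrt (traceNorm A) * Real.sqrt ((Mᴴ * M).trace.re)
      ≤ Real.sqrt (traceNorm A) * Real.sqrt (traceNorm A) :=
        mul_le_mul_of_nonneg_left (Real.sqrt_le_sqrt hMM) (Real.sqrt_nonneg _)
    _ = traceNorm A := Real.mul_self_sqrt htA
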